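/- For all x > 0 and y > 0 with x ≠ y one has (tanh x − tanh y)/(x − y) ≤ 4·exp(−2·min{x,y}). -/

import Mathlib

lemma tanh_hasDerivAt (t : ℝ) : HasDerivAt Real.tanh (1 / Real.cosh t ^ 2) t := by
  have h := (Real.hasDerivAt_sinh t).div (Real.hasDerivAt_cosh t) (Real.cosh_pos t).ne'
  have heq : (Real.sinh / Real.cosh) = Real.tanh :=
    funext fun x => (Real.tanh_eq_sinh_div_cosh x).symm
  rw [heq] at h
  refine h.congr_deriv ?_
  have := Real.cosh_sq_sub_sinh_sq t
  rw [← this]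
  ring

lemma aux_tanh (a b : ℝ) (ha : 0 < a) (hab : a < b) :
    (Real.tanh b - Real.tanh a) / (b - a) ≤ 4 * Real.exp (-2 * a) := by
  have hcont : ContinuousOn Real.tanh (Set.Icc a b) :=
    (Differentiable.continuous fun t => (tanh_hasDerivAt t).differentiableAt).continuousOn
  obtain ⟨c, hc, hderiv⟩ := exists_hasDerivAt_eq_slope Real.tanh
    (fun t => 1 / Real.cosh t ^ 2) hab hcont (fun t _ => tanh_hasDerivAt t)
  rw [← hderiv]
  have hec : Real.exp c / 2 ≤ Real.cosh c := by
    rw [Real.cosh_eq]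
    have := (Real.exp_pos (-c)).le
    linarith
  have h1 : 1 / Real.cosh c ^ 2 ≤ 4 * Real.exp (-2 * c) := by
    have he : Real.exp (-2 * c) * Real.exp c ^ 2 = 1 := by
      rw [← Real.exp_nat_mul, ← Real.exp_add]; norm_num
    have hp := Real.exp_pos c
    have hcp := Real.cosh_pos c
    have hsq : Real.exp c ^ 2 / 4 ≤ Real.cosh c ^ 2 := by nlinarith
    rw [div_le_iff₀ (by positivity)]
    nlinarith [Real.exp_pos (-2 * c)]
  have h2 : Real.exp (-2 * c) ≤ Real.exp (-2 * a) := by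
    apply Real.exp_le_exp.2
    have := hc.1
    linarith
  calc 1 / Real.cosh c ^ 2 ≤ 4 * Real.exp (-2 * c) := h1
    _ ≤ 4 * Real.exp (-2 * a) := by linarith

theorem tanh_diff_quotient_le (x y : ℝ) (hx : 0 < x) (hy : 0 < y) (hxy : x ≠ y) :
    (Real.tanh x - Real.tanh y) / (x - y) ≤ 4 * Real.exp (-2 * min x y) := by
  rcases hxy.lt_or_gt with h | h
  · have key := aux_tanh x y hx h
    have : (Real.tanh x - Real.tanh y) / (x - y)
        = (Real.tanh y - Real.tanh x) / (y - x) := by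
      rw [← neg_div_neg_eq]; ring_nf
    rw [this, min_eq_left h.le]
    exact key
  · rw [min_eq_right h.le]
    exact aux_tanh y x hy h
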